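/- The family H of edge sets of leaf-to-root paths in a rooted complete (r-1)-ary tree of depth ℓ is an ℓ-bounded family of size (r-1)^ℓ with VC-dimension at most 1 that contains no r-sunflower. -/

import Mathlib

/-- A family of `r` distinct sets is an `r`-sunflower if all pairwise
intersections of distinct members coincide. -/
def IsSunflower {α : Type*} [DecidableEq α] (r : ℕ) (P : Finset (Finset α)) : Prop :=
  P.card = r ∧ ∀ A ∈ P, ∀ B ∈ P, ∀ A' ∈ P, ∀ B' ∈ P,
    A ≠ B → A' ≠ B' → A ∩ B = A' ∩ B'

/-- `H` contains an `r`-sunflower. -/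
def HasSunflower {α : Type*} [DecidableEq α] (H : Finset (Finset α)) (r : ℕ) : Prop :=
  ∃ P ⊆ H, IsSunflower r P

/-- `H` shatters `T` if every subset of `T` is the trace of a member of `H`. -/
def Shatters {α : Type*} [DecidableEq α] (H : Finset (Finset α)) (T : Finset α) : Prop :=
  ∀ A ⊆ T, ∃ S ∈ H, T ∩ S = A

/-- The VC-dimension of `H` is at most `d`. -/
def VCdimLE {α : Type*} [DecidableEq α] (H : Finset (Finset α)) (d : ℕ) : Prop :=
  ∀ T : Finset α, Shatters H T → T.card ≤ d

/-- In the rooted complete `(r-1)`-ary tree of depth `ℓ`, a leaf is a function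
`Fin ℓ → Fin (r-1)`, an edge is identified with the (nonempty) prefix of choices
leading to its lower endpoint, and the edge set of the leaf-to-root path of a
leaf `f` consists of the prefixes of `f` of lengths `1, …, ℓ`. -/
def pathEdges (r ℓ : ℕ) (f : Fin ℓ → Fin (r - 1)) : Finset (List (Fin (r - 1))) :=
  (Finset.range ℓ).image fun i => (List.ofFn f).take (i + 1)

section Aux
variable {r ℓ : ℕ}

lemma mem_pathEdges {f : Fin ℓ → Fin (r-1)} {x : List (Fin (r-1))} :
    x ∈ pathEdges r ℓ f ↔ ∃ i, i < ℓ ∧ x = (List.ofFn f).take (i+1) := by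
  simp [pathEdges, eq_comm]

lemma take_mem_pathEdges {f : Fin ℓ → Fin (r-1)} {k : ℕ} (h1 : 1 ≤ k) (h2 : k ≤ ℓ) :
    (List.ofFn f).take k ∈ pathEdges r ℓ f :=
  mem_pathEdges.mpr ⟨k-1, by omega, by rw [Nat.sub_add_cancel h1]⟩

lemma length_of_mem {f : Fin ℓ → Fin (r-1)} {x : List (Fin (r-1))}
    (hx : x ∈ pathEdges r ℓ f) :
    x = (List.ofFn f).take x.length ∧ 1 ≤ x.length ∧ x.length ≤ ℓ := by
  obtain ⟨i, hi, rfl⟩ := mem_pathEdges.mp hx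
  have hlen : ((List.ofFn f).take (i+1)).length = i+1 := by
    simp [List.length_take]; omega
  rw [hlen]; exact ⟨rfl, by omega, by omega⟩

lemma card_pathEdges (f : Fin ℓ → Fin (r-1)) : (pathEdges r ℓ f).card = ℓ := by
  rw [pathEdges, Finset.card_image_of_injOn, Finset.card_range]
  intro i hi j hj hij
  simp only [Finset.mem_coe, Finset.mem_range] at hi hj
  have := congrArg List.length hij
  simp [List.length_take] at this; omega

lemma pathEdges_injective (r ℓ : ℕ) : Function.Injective (pathEdges r ℓ) := by
  intro f g h
  rcases Nat.eq_zero_or_pos ℓ with h0 | h0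
  · subst h0; funext i; exact absurd i.2 (by omega)
  · have hf : (List.ofFn f).take ℓ ∈ pathEdges r ℓ g := h ▸ take_mem_pathEdges h0 le_rfl
    obtain ⟨hx, -, -⟩ := length_of_mem hf
    have hlen : ((List.ofFn f).take ℓ).length = ℓ := by simp
    rw [hlen] at hx
    have : List.ofFn f = List.ofFn g := by
      rw [List.take_of_length_le (by simp)] at hx
      rw [hx, List.take_of_length_le (by simp)]
    exact List.ofFn_injective this

lemma length_le_card_inter {f g : Fin ℓ → Fin (r-1)} {y : List (Fin (r-1))}
    (hy : y ∈ pathEdges r ℓ f ∩ pathEdges r ℓ g) :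
    y.length ≤ (pathEdges r ℓ f ∩ pathEdges r ℓ g).card := by
  obtain ⟨hyf, hyg⟩ := Finset.mem_inter.mp hy
  obtain ⟨hyf1, hyf2, hyf3⟩ := length_of_mem hyf
  obtain ⟨hyg1, -, -⟩ := length_of_mem hyg
  have hsub : (Finset.range y.length).image (fun j => (List.ofFn f).take (j+1)) ⊆
      pathEdges r ℓ f ∩ pathEdges r ℓ g := by
    intro x hx
    simp only [Finset.mem_image, Finset.mem_range] at hx
    obtain ⟨j, hj, rfl⟩ := hx
    refine Finset.mem_inter.mpr ⟨take_mem_pathEdges (by omega) (by omega), ?_⟩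
    have h1 : (List.ofFn f).take (j+1) = y.take (j+1) := by
      rw [hyf1, List.take_take]; congr 1; omega
    have h2 : y.take (j+1) = (List.ofFn g).take (j+1) := by
      rw [hyg1, List.take_take]; congr 1; omega
    rw [h1, h2]; exact take_mem_pathEdges (by omega) (by omega)
  calc y.length = ((Finset.range y.length).image (fun j => (List.ofFn f).take (j+1))).card := by
        rw [Finset.card_image_of_injOn, Finset.card_range]
        intro i hi j hj hij
        simp only [Finset.mem_coe, Finset.mem_range] at hi hj
        have := congrArg List.length hij
        simp [List.length_take] at this; omega
    _ ≤ _ := Finset.card_le_card hsub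

lemma core_ne {f g : Fin ℓ → Fin (r-1)}
    (hkℓ : (pathEdges r ℓ f ∩ pathEdges r ℓ g).card < ℓ) :
    f ⟨(pathEdges r ℓ f ∩ pathEdges r ℓ g).card, hkℓ⟩ ≠
      g ⟨(pathEdges r ℓ f ∩ pathEdges r ℓ g).card, hkℓ⟩ := by
  set Y := pathEdges r ℓ f ∩ pathEdges r ℓ g with hY
  set k := Y.card with hk
  intro heq
  have htk : (List.ofFn f).take k = (List.ofFn g).take k := by
    rcases Nat.eq_zero_or_pos k with h0 | h0
    · simp [h0]
    · have hinj : Set.InjOn List.length (Y : Set (List (Fin (r-1)))) := by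
        intro a ha b hb hab
        have ha' := (length_of_mem (Finset.mem_inter.mp ha).1).1
        have hb' := (length_of_mem (Finset.mem_inter.mp hb).1).1
        rw [ha', hb', hab]
      have hsub : Y.image List.length ⊆ Finset.Icc 1 k := by
        intro n hn
        simp only [Finset.mem_image] at hn
        obtain ⟨y, hy, rfl⟩ := hn
        exact Finset.mem_Icc.mpr ⟨(length_of_mem (Finset.mem_inter.mp hy).1).2.1,
          length_le_card_inter hy⟩
      have hcard : (Y.image List.length).card = k := by
        rw [Finset.card_image_of_injOn hinj]
      have heqI : Y.image List.length = Finset.Icc 1 k := by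
        apply Finset.eq_of_subset_of_card_le hsub
        rw [hcard, Nat.card_Icc]; omega
      have : k ∈ Y.image List.length := by
        rw [heqI]; exact Finset.mem_Icc.mpr ⟨h0, le_rfl⟩
      obtain ⟨y, hy, hylen⟩ := Finset.mem_image.mp this
      have h1 := (length_of_mem (Finset.mem_inter.mp hy).1).1
      have h2 := (length_of_mem (Finset.mem_inter.mp hy).2).1
      rw [hylen] at h1 h2
      rw [← h1, ← h2]
  have hts : (List.ofFn f).take (k+1) = (List.ofFn g).take (k+1) := by
    rw [List.take_succ, List.take_succ, htk, List.getElem?_ofFn, List.getElem?_ofFn]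
    simp only [List.ofFnNthVal, dif_pos hkℓ]
    rw [heq]
  have hmem : (List.ofFn f).take (k+1) ∈ Y := by
    refine Finset.mem_inter.mpr ⟨take_mem_pathEdges (by omega) (by omega), ?_⟩
    rw [hts]; exact take_mem_pathEdges (by omega) (by omega)
  have := length_le_card_inter (f := f) (g := g) hmem
  simp [List.length_take] at this
  have hYk : (pathEdges r ℓ f ∩ pathEdges r ℓ g).card = k := rfl
  omega

end Aux

/-- The family of edge sets of leaf-to-root paths in a rooted complete `(r-1)`-ary
tree of depth `ℓ` is an `ℓ`-bounded family of size `(r-1)^ℓ` with VC-dimension at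
most 1 that contains no `r`-sunflower. -/
theorem stmt4 (r ℓ : ℕ) (hr : 2 ≤ r) :
    (∀ S ∈ Finset.univ.image (pathEdges r ℓ), S.card ≤ ℓ) ∧
    (Finset.univ.image (pathEdges r ℓ)).card = (r - 1) ^ ℓ ∧
    VCdimLE (Finset.univ.image (pathEdges r ℓ)) 1 ∧
    ¬ HasSunflower (Finset.univ.image (pathEdges r ℓ)) r := by
  have hHcard : (Finset.univ.image (pathEdges r ℓ)).card = (r - 1) ^ ℓ := by
    rw [Finset.card_image_of_injective _ (pathEdges_injective r ℓ), Finset.card_univ]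
    simp
  refine ⟨?_, hHcard, ?_, ?_⟩
  · intro S hS
    obtain ⟨f, -, rfl⟩ := Finset.mem_image.mp hS
    exact le_of_eq (card_pathEdges f)
  · -- VC dimension ≤ 1
    intro T hT
    by_contra hcard
    push_neg at hcard
    obtain ⟨a, ha, b, hb, hab⟩ := Finset.one_lt_card.mp hcard
    have key : ∀ a b : List (Fin (r-1)), a ∈ T → b ∈ T → a ≠ b →
        ∀ f : Fin ℓ → Fin (r-1), a ∈ pathEdges r ℓ f → b ∈ pathEdges r ℓ f →
        a.length < b.length → False := by
      intro a b ha hb hab f haf hbf hlen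
      obtain ⟨S', hS', hTS'⟩ := hT {b} (Finset.singleton_subset_iff.mpr hb)
      obtain ⟨g, -, rfl⟩ := Finset.mem_image.mp hS'
      have hbg : b ∈ pathEdges r ℓ g :=
        (Finset.mem_inter.mp (hTS' ▸ Finset.mem_singleton_self b)).2
      obtain ⟨haf1, haf2, haf3⟩ := length_of_mem haf
      obtain ⟨hbf1, -, hbf3⟩ := length_of_mem hbf
      obtain ⟨hbg1, -, -⟩ := length_of_mem hbg
      have hag : a ∈ pathEdges r ℓ g := by
        have h1 : a = b.take a.length := by
          conv_lhs => rw [haf1]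
          rw [hbf1, List.take_take]
          congr 1; omega
        have h2 : b.take a.length = (List.ofFn g).take a.length := by
          conv_lhs => rw [hbg1]
          rw [List.take_take]; congr 1; omega
        rw [h1, h2]
        exact take_mem_pathEdges haf2 haf3
      have : a ∈ T ∩ pathEdges r ℓ g := Finset.mem_inter.mpr ⟨ha, hag⟩
      rw [hTS'] at this
      exact hab (Finset.mem_singleton.mp this)
    obtain ⟨S, hS, hTS⟩ := hT {a, b} (Finset.insert_subset ha
      (Finset.singleton_subset_iff.mpr hb))
    obtain ⟨f, -, rfl⟩ := Finset.mem_image.mp hS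
    have haf : a ∈ pathEdges r ℓ f :=
      (Finset.mem_inter.mp (hTS ▸ Finset.mem_insert_self a {b})).2
    have hbf : b ∈ pathEdges r ℓ f := by
      have : b ∈ T ∩ pathEdges r ℓ f := hTS ▸ Finset.mem_insert_of_mem
        (Finset.mem_singleton_self b)
      exact (Finset.mem_inter.mp this).2
    rcases Nat.lt_trichotomy a.length b.length with h | h | h
    · exact key a b ha hb hab f haf hbf h
    · apply hab
      rw [(length_of_mem haf).1, (length_of_mem hbf).1, h]
    · exact key b a hb ha hab.symm f hbf haf h
  · -- no r-sunflower
    rintro ⟨P, hPH, hPcard, hPsun⟩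
    have hP2 : 1 < P.card := by omega
    obtain ⟨A0, hA0, B0, hB0, hAB0⟩ := Finset.one_lt_card.mp hP2
    have hch : ∀ A : Finset (List (Fin (r-1))),
        ∃ f : Fin ℓ → Fin (r-1), A ∈ P → pathEdges r ℓ f = A := by
      intro A
      by_cases h : A ∈ P
      · obtain ⟨f, -, hf⟩ := Finset.mem_image.mp (hPH h)
        exact ⟨f, fun _ => hf⟩
      · exact ⟨fun _ => ⟨0, by omega⟩, fun h' => absurd h' h⟩
    choose F hF using hch
    have cardP : ∀ A ∈ P, A.card = ℓ := by
      intro A hA; rw [← hF A hA, card_pathEdges]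
    set Y := A0 ∩ B0 with hYdef
    have hYℓ : Y.card < ℓ := by
      have hss : Y ⊂ A0 := by
        refine Finset.ssubset_iff_subset_ne.mpr ⟨Finset.inter_subset_left, ?_⟩
        intro h
        apply hAB0
        refine Finset.eq_of_subset_of_card_le ?_ ?_
        · rw [← h]; exact Finset.inter_subset_right
        · rw [cardP A0 hA0, cardP B0 hB0]
      calc Y.card < A0.card := Finset.card_lt_card hss
        _ = ℓ := cardP A0 hA0
    have hinj : Set.InjOn (fun A => F A ⟨Y.card, hYℓ⟩) (P : Set (Finset (List (Fin (r-1))))) := by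
      intro A hA B hB hFeq
      by_contra hABne
      have hiA := hF A hA
      have hiB := hF B hB
      have hinter : pathEdges r ℓ (F A) ∩ pathEdges r ℓ (F B) = Y := by
        rw [hiA, hiB]
        exact hPsun A hA B hB A0 hA0 B0 hB0 hABne hAB0
      have hklt : (pathEdges r ℓ (F A) ∩ pathEdges r ℓ (F B)).card < ℓ := by
        rw [hinter]; exact hYℓ
      have := core_ne hklt
      apply this
      have hfin : (⟨(pathEdges r ℓ (F A) ∩ pathEdges r ℓ (F B)).card, hklt⟩ : Fin ℓ)
          = ⟨Y.card, hYℓ⟩ := by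
        apply Fin.ext; simp [hinter]
      rw [hfin]
      exact hFeq
    have hle : P.card ≤ (Finset.univ : Finset (Fin (r-1))).card :=
      Finset.card_le_card_of_injOn _ (fun _ _ => Finset.mem_univ _) hinj
    rw [hPcard, Finset.card_univ, Fintype.card_fin] at hle
    omega
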